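/- Let ψ: ℕ → [0,1/2], let 𝒜_q = ⋃_{1≤p≤q, gcd(p,q)=1} (p/q − ψ(q)/q, p/q + ψ(q)/q), and let D(q,r) = max(r·ψ(q), q·ψ(r))/gcd(q,r). If q ≠ r are positive integers with D(q,r) < 1/2, then 𝒜_q ∩ 𝒜_r = ∅. -/

import Mathlib

open Finset

/-- The set `𝒜_q` of reals within `ψ(q)/q` of a reduced fraction with denominator `q`. -/
noncomputable def Aset (ψ : ℕ → ℝ) (q : ℕ) : Set ℝ :=
  ⋃ p ∈ (Finset.Icc 1 q).filter (fun p => Nat.gcd p q = 1),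
    Set.Ioo ((p : ℝ) / q - ψ q / q) ((p : ℝ) / q + ψ q / q)

/-- `D(q,r) = max(r ψ(q), q ψ(r)) / gcd(q,r)`. -/
noncomputable def Dfun (ψ : ℕ → ℝ) (q r : ℕ) : ℝ :=
  max ((r : ℝ) * ψ q) ((q : ℝ) * ψ r) / (Nat.gcd q r : ℝ)

theorem disjoint_if_D_small
    (ψ : ℕ → ℝ) (hψ : ∀ n, ψ n ∈ Set.Icc (0 : ℝ) (1 / 2))
    (q r : ℕ) (hq : 0 < q) (hr : 0 < r) (hqr : q ≠ r)
    (hD : Dfun ψ q r < 1 / 2) :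
    Aset ψ q ∩ Aset ψ r = ∅ := by
  rw [Set.eq_empty_iff_forall_notMem]
  rintro x ⟨hxq, hxr⟩
  simp only [Aset, Set.mem_iUnion, Finset.mem_filter, Finset.mem_Icc, Set.mem_Ioo] at hxq hxr
  obtain ⟨p, ⟨⟨hp1, hpq⟩, hpco⟩, hx1, hx2⟩ := hxq
  obtain ⟨p', ⟨⟨hp'1, hp'r⟩, hp'co⟩, hy1, hy2⟩ := hxr
  set d := Nat.gcd q r with hdd
  have hdpos : 0 < d := Nat.gcd_pos_of_pos_left _ hq
  have hq' : (0 : ℝ) < q := by exact_mod_cast hq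
  have hr' : (0 : ℝ) < r := by exact_mod_cast hr
  have hd' : (0 : ℝ) < d := by exact_mod_cast hdpos
  -- p*r ≠ p'*q
  have hne : p * r ≠ p' * q := by
    intro h
    have h1 : q ∣ p * r := ⟨p', h.trans (Nat.mul_comm _ _)⟩
    have h2 : r ∣ p' * q := ⟨p, h.symm.trans (Nat.mul_comm _ _)⟩
    have hqdr : q ∣ r := (Nat.Coprime.dvd_of_dvd_mul_left
      (Nat.coprime_comm.mp hpco) h1)
    have hrdq : r ∣ q := (Nat.Coprime.dvd_of_dvd_mul_left
      (Nat.coprime_comm.mp hp'co) h2)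
    exact hqr (Nat.dvd_antisymm hqdr hrdq)
  -- the integer k = p*r - p'*q is a nonzero multiple of d
  have hkne : (p : ℤ) * r - (p' : ℤ) * q ≠ 0 := by
    intro h
    apply hne
    have : (p : ℤ) * r = (p' : ℤ) * q := by linarith
    exact_mod_cast this
  have hdvd : (d : ℤ) ∣ (p : ℤ) * r - (p' : ℤ) * q := by
    have h1 : (d : ℤ) ∣ (r : ℤ) := Int.natCast_dvd_natCast.mpr (Nat.gcd_dvd_right q r)
    have h2 : (d : ℤ) ∣ (q : ℤ) := Int.natCast_dvd_natCast.mpr (Nat.gcd_dvd_left q r)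
    exact dvd_sub (Dvd.dvd.mul_left h1 _) (Dvd.dvd.mul_left h2 _)
  have hkabs : (d : ℤ) ≤ |(p : ℤ) * r - (p' : ℤ) * q| :=
    Int.le_of_dvd (abs_pos.mpr hkne) (hdvd.trans (self_dvd_abs _))
  have habs : (d : ℝ) ≤ |(p : ℝ) * r - (p' : ℝ) * q| := by
    have : ((d : ℤ) : ℝ) ≤ |(((p : ℤ) * r - (p' : ℤ) * q : ℤ) : ℝ)| := by
      rw [← Int.cast_abs]
      exact_mod_cast hkabs
    push_cast at this
    convert this using 2
  -- from hD
  have hmax : max ((r : ℝ) * ψ q) ((q : ℝ) * ψ r) < d / 2 := by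
    have := (div_lt_iff₀ hd').mp hD
    linarith
  have hm1 : (r : ℝ) * ψ q < d / 2 := lt_of_le_of_lt (le_max_left _ _) hmax
  have hm2 : (q : ℝ) * ψ r < d / 2 := lt_of_le_of_lt (le_max_right _ _) hmax
  -- clear denominators in interval conditions
  rw [div_sub_div_same, div_lt_iff₀ hq'] at hx1
  rw [← add_div, lt_div_iff₀ hq'] at hx2
  rw [div_sub_div_same, div_lt_iff₀ hr'] at hy1
  rw [← add_div, lt_div_iff₀ hr'] at hy2
  have h1 : (p : ℝ) * r - ψ q * r < x * q * r := by nlinarith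
  have h2 : x * q * r < (p : ℝ) * r + ψ q * r := by nlinarith
  have h3 : (p' : ℝ) * q - ψ r * q < x * q * r := by nlinarith
  have h4 : x * q * r < (p' : ℝ) * q + ψ r * q := by nlinarith
  have hm1' : ψ q * r < (d : ℝ) / 2 := by linarith [hm1, mul_comm (r : ℝ) (ψ q)]
  have hm2' : ψ r * q < (d : ℝ) / 2 := by linarith [hm2, mul_comm (q : ℝ) (ψ r)]
  rcases le_abs.mp habs with h | h
  · linarith
  · linarith
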